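/- arXiv:1005.4566 — 3 statements merged into one kernel-verified Lean document; each statement's English description precedes it below -/
import Mathlib

section
/- For every prime p, there exists a matrix M ∈ GL₄(ℤ_p) such that M·Mᵀ = -I; equivalently, the quadratic forms x₁²+x₂²+x₃²+x₄² and -(x₁²+x₂²+x₃²+x₄²) are equivalent over ℤ_p. -/
open Polynomial

lemma toZMod_zero_iff {p : ℕ} [Fact p.Prime] (x : ℤ_[p]) :
    PadicInt.toZMod x = 0 ↔ ‖x‖ < 1 := by
  rw [PadicInt.norm_lt_one_iff_dvd, ← Ideal.mem_span_singleton,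
    ← PadicInt.maximalIdeal_eq_span_p, ← PadicInt.ker_toZMod, RingHom.mem_ker]

lemma sq_eq_of_hensel {p : ℕ} [Fact p.Prime] (c : ℤ_[p])
    (A : ℤ_[p]) (hnorm : ‖(X ^ 2 + C c : ℤ_[p][X]).eval A‖ <
      ‖((X ^ 2 + C c : ℤ_[p][X]).derivative).eval A‖ ^ 2) :
    ∃ z : ℤ_[p], z ^ 2 = -c := by
  obtain ⟨z, hz, -⟩ := hensels_lemma hnorm
  exact ⟨z, by simpa [eq_neg_iff_add_eq_zero] using hz⟩

lemma sum_four_sq_neg_one (p : ℕ) [hp : Fact p.Prime] :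
    ∃ a b c d : ℤ_[p], a ^ 2 + b ^ 2 + c ^ 2 + d ^ 2 = -1 := by
  rcases eq_or_ne p 2 with h2 | hodd
  · subst h2
    obtain ⟨z, hz⟩ := sq_eq_of_hensel (7 : ℤ_[2]) 1 (by
      have h1 : ((X : ℤ_[2][X]) ^ 2 + C 7).eval 1 = 8 := by simp; norm_num
      have h2 : (((X : ℤ_[2][X]) ^ 2 + C 7).derivative).eval 1 = 2 := by
        simp [derivative_C]; norm_num
      rw [h1, h2]
      have h8 : (8 : ℤ_[2]) = 2 ^ 3 := by norm_num
      rw [h8, norm_pow]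
      have hn : ‖(2 : ℤ_[2])‖ = (2 : ℝ)⁻¹ := by
        simpa using PadicInt.norm_p (p := 2)
      rw [hn]; norm_num)
    exact ⟨1, 1, 2, z, by rw [hz]; ring⟩
  · obtain ⟨a, b, hab⟩ := ZMod.sq_add_sq p (-1 : ZMod p)
    have hex : ∃ a b : ZMod p, a ^ 2 + b ^ 2 = -1 ∧ a ≠ 0 := by
      rcases eq_or_ne a 0 with rfl | ha
      · exact ⟨b, 0, by simpa [add_comm] using hab, by rintro rfl; simp at hab⟩
      · exact ⟨a, b, hab, ha⟩
    obtain ⟨a, b, hab, ha⟩ := hex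
    set A : ℤ_[p] := (a.val : ℤ_[p]) with hA
    set B : ℤ_[p] := (b.val : ℤ_[p]) with hB
    have hAa : PadicInt.toZMod A = a := by
      rw [hA, map_natCast, ZMod.natCast_val, ZMod.cast_id]
    have hBb : PadicInt.toZMod B = b := by
      rw [hB, map_natCast, ZMod.natCast_val, ZMod.cast_id]
    have hAnorm : ‖A‖ = 1 := by
      rcases lt_or_eq_of_le (PadicInt.norm_le_one A) with h | h
      · exact absurd (hAa ▸ (toZMod_zero_iff A).2 h) ha
      · exact h
    have h2norm : ‖(2 : ℤ_[p])‖ = 1 := by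
      rcases lt_or_eq_of_le (PadicInt.norm_le_one (2 : ℤ_[p])) with h | h
      · have := (toZMod_zero_iff (2 : ℤ_[p])).2 h
        rw [show (2 : ℤ_[p]) = ((2 : ℕ) : ℤ_[p]) by norm_num, map_natCast,
          ZMod.natCast_eq_zero_iff] at this
        exact absurd ((Nat.prime_dvd_prime_iff_eq hp.out Nat.prime_two).1 this) hodd
      · exact h
    obtain ⟨z, hz⟩ := sq_eq_of_hensel (B ^ 2 + 1) A (by
      have h1 : ((X : ℤ_[p][X]) ^ 2 + C (B ^ 2 + 1)).eval A = A ^ 2 + (B ^ 2 + 1) := by simp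
      have h2 : (((X : ℤ_[p][X]) ^ 2 + C (B ^ 2 + 1)).derivative).eval A = 2 * A := by
        simp [derivative_C, derivative_pow]
      rw [h1, h2, norm_mul, h2norm, hAnorm]
      rw [show (1 : ℝ) * 1 = 1 by ring, one_pow]
      apply (toZMod_zero_iff _).1
      rw [map_add, map_add, map_pow, map_pow, map_one, hAa, hBb]
      linear_combination hab)
    exact ⟨z, B, 0, 0, by rw [hz]; ring⟩


/-- For every prime `p` there is `M ∈ GL₄(ℤ_[p])` with `M·Mᵀ = -I`; equivalently, the
quadratic forms `x₁²+x₂²+x₃²+x₄²` and `-(x₁²+x₂²+x₃²+x₄²)` are equivalent over `ℤ_[p]`. -/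
theorem quadratic_form_sum_sq_equiv_neg_sum_sq_padic (p : ℕ) [Fact p.Prime] :
    ∃ M : Matrix (Fin 4) (Fin 4) ℤ_[p], IsUnit M.det ∧ M * M.transpose = -1 ∧
      ∀ x : Fin 4 → ℤ_[p], -(∑ i, x i ^ 2) = ∑ i, (M.mulVec x) i ^ 2 := by
  obtain ⟨a, b, c, d, h⟩ := sum_four_sq_neg_one p
  have ht : (!![a, b, c, d; -b, a, -d, c; -c, d, a, -b; -d, -c, b, a]).transpose
      = !![a, -b, -c, -d; b, a, d, -c; c, -d, a, b; d, c, -b, a] := by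
    ext i j
    fin_cases i <;> fin_cases j <;> rfl
  have hsmul : (!![a, b, c, d; -b, a, -d, c; -c, d, a, -b; -d, -c, b, a]
      * !![a, -b, -c, -d; b, a, d, -c; c, -d, a, b; d, c, -b, a])
      = (a ^ 2 + b ^ 2 + c ^ 2 + d ^ 2) • (1 : Matrix (Fin 4) (Fin 4) ℤ_[p]) := by
    ext i j
    fin_cases i <;> fin_cases j <;>
      simp [Matrix.mul_apply, Fin.sum_univ_four, Matrix.one_apply] <;> ring
  have hmul : (!![a, b, c, d; -b, a, -d, c; -c, d, a, -b; -d, -c, b, a]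
      * (!![a, b, c, d; -b, a, -d, c; -c, d, a, -b; -d, -c, b, a]).transpose)
      = (-1 : Matrix (Fin 4) (Fin 4) ℤ_[p]) := by
    rw [ht, hsmul, h]
    simp
  refine ⟨!![a, b, c, d; -b, a, -d, c; -c, d, a, -b; -d, -c, b, a], ?_, hmul, ?_⟩
  · have hdet : (!![a, b, c, d; -b, a, -d, c; -c, d, a, -b; -d, -c, b, a]
        : Matrix (Fin 4) (Fin 4) ℤ_[p]).det
        * (!![a, b, c, d; -b, a, -d, c; -c, d, a, -b; -d, -c, b, a]).transpose.det = 1 := by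
      rw [← Matrix.det_mul, hmul, Matrix.det_neg]
      norm_num
    exact IsUnit.of_mul_eq_one _ hdet
  · intro x
    simp [Matrix.mulVec, dotProduct, Fin.sum_univ_four]
    linear_combination (-(x 0 ^ 2 + x 1 ^ 2 + x 2 ^ 2 + x 3 ^ 2)) * h
end

section
/- Let p be a prime and m ≥ 4, n ≥ 0. The quadratic form q_{m,n} = Σ_{i=1}^m x_i² − Σ_{i=1}^n y_i² and the quadratic form q_{m-4,n+4} = Σ_{i=1}^{m-4} x_i² − Σ_{i=1}^{n+4} y_i² are equivalent over ℤ_p, i.e., there exists a matrix in GL_{m+n}(ℤ_p) transforming one into the other. -/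
open Matrix PadicInt

variable {p : ℕ} [Fact p.Prime]

lemma my_toZMod_eq_zero_iff (z : ℤ_[p]) : PadicInt.toZMod z = 0 ↔ (p : ℤ_[p]) ∣ z := by
  rw [← RingHom.mem_ker, PadicInt.ker_toZMod, PadicInt.maximalIdeal_eq_span_p,
    Ideal.mem_span_singleton]

lemma my_norm_eq_one_of (z : ℤ_[p]) (h : PadicInt.toZMod z ≠ 0) : ‖z‖ = 1 := by
  have h1 : ¬ ‖z‖ < 1 := by
    rw [PadicInt.norm_lt_one_iff_dvd, ← my_toZMod_eq_zero_iff]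
    exact h
  have := PadicInt.norm_le_one z
  linarith [lt_or_eq_of_le this]

lemma my_exists_sq (u a : ℤ_[p]) (h : ‖a ^ 2 - u‖ < ‖2 * a‖ ^ 2) : ∃ z : ℤ_[p], z ^ 2 = u := by
  have heval : (Polynomial.X ^ 2 - Polynomial.C u).eval a = a ^ 2 - u := by simp
  have hderiv : (Polynomial.X ^ 2 - Polynomial.C u).derivative = Polynomial.C 2 * Polynomial.X := by
    simp [Polynomial.derivative_sub, Polynomial.derivative_X_pow]
    rw [← Polynomial.C_1, ← Polynomial.C_add]; norm_num
  have key := @hensels_lemma p _ ℤ_[p] _ _ (Polynomial.X ^ 2 - Polynomial.C u) a ?_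
  · obtain ⟨z, hz, -⟩ := key
    refine ⟨z, ?_⟩
    have h0 : z ^ 2 - u = 0 := by simpa using hz
    exact sub_eq_zero.mp h0
  · show ‖(Polynomial.X ^ 2 - Polynomial.C u).eval a‖ <
      ‖(Polynomial.X ^ 2 - Polynomial.C u).derivative.eval a‖ ^ 2
    rw [heval, hderiv]
    simpa using h

lemma my_neg_one_sum_four_sq :
    ∃ a b c d : ℤ_[p], a ^ 2 + b ^ 2 + c ^ 2 + d ^ 2 = -1 := by
  by_cases hp2 : p = 2
  · subst hp2
    obtain ⟨z, hz⟩ := my_exists_sq (-7 : ℤ_[2]) 1 (by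
      have h8 : ((1 : ℤ_[2]) ^ 2 - (-7)) = ((2 : ℕ) : ℤ_[2]) ^ 3 := by norm_num
      have h2 : (2 : ℤ_[2]) * 1 = ((2 : ℕ) : ℤ_[2]) := by norm_num
      rw [h8, h2, PadicInt.norm_p_pow, PadicInt.norm_p]
      norm_num)
    exact ⟨1, 5, 2 * z, 1, by rw [mul_pow, hz]; ring⟩
  · obtain ⟨a, b, hab⟩ := ZMod.sq_add_sq p (-1)
    obtain ⟨a, b, hab, ha⟩ : ∃ a b : ZMod p, a ^ 2 + b ^ 2 = -1 ∧ a ≠ 0 := by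
      rcases eq_or_ne a 0 with h | h
      · refine ⟨b, a, by rw [add_comm]; exact hab, ?_⟩
        intro hb
        rw [h, hb] at hab
        simp at hab
      · exact ⟨a, b, hab, h⟩
    set A : ℤ_[p] := (a.val : ℤ_[p]) with hA
    set B : ℤ_[p] := (b.val : ℤ_[p]) with hB
    have htA : PadicInt.toZMod A = a := by
      rw [hA, map_natCast, ZMod.natCast_val, ZMod.cast_id]
    have htB : PadicInt.toZMod B = b := by
      rw [hB, map_natCast, ZMod.natCast_val, ZMod.cast_id]
    have hnorm : ‖A ^ 2 - (-1 - B ^ 2)‖ < ‖2 * A‖ ^ 2 := by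
      have h1 : ‖2 * A‖ = 1 := by
        apply my_norm_eq_one_of
        rw [_root_.map_mul, htA]
        have h2 : ((2 : ℕ) : ZMod p) ≠ 0 := by
          rw [Ne, ZMod.natCast_eq_zero_iff]
          intro hdvd
          exact hp2 ((Nat.prime_dvd_prime_iff_eq Fact.out Nat.prime_two).mp hdvd)
        have h3 : PadicInt.toZMod (2 : ℤ_[p]) = ((2 : ℕ) : ZMod p) := by
          rw [show ((2 : ℕ) : ZMod p) = (2 : ZMod p) by push_cast; ring]
          exact map_ofNat _ 2
        rw [h3]
        exact mul_ne_zero h2 ha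
      have h2 : ‖A ^ 2 - (-1 - B ^ 2)‖ < 1 := by
        rw [PadicInt.norm_lt_one_iff_dvd, ← my_toZMod_eq_zero_iff]
        rw [map_sub, map_pow, map_sub, map_neg, _root_.map_one, map_pow, htA, htB]
        linear_combination hab
      rw [h1]
      simpa using h2
    obtain ⟨z, hz⟩ := my_exists_sq (-1 - B ^ 2) A hnorm
    exact ⟨z, B, 0, 0, by rw [hz]; ring⟩

section QB
variable {R : Type*} [CommRing R]

def qB (a b c d : R) : Matrix (Fin 4) (Fin 4) R :=
  !![a,-b,-c,-d; b,a,-d,c; c,d,a,-b; d,-c,b,a]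

def qBinv (a b c d : R) : Matrix (Fin 4) (Fin 4) R :=
  !![-a,-b,-c,-d; b,-a,-d,c; c,d,-a,-b; d,-c,b,-a]

lemma qB_mul_inv (a b c d : R) (h : a ^ 2 + b ^ 2 + c ^ 2 + d ^ 2 = -1) :
    qB a b c d * qBinv a b c d = 1 := by
  ext i j
  fin_cases i <;> fin_cases j <;>
    simp [qB, qBinv, Matrix.mul_apply, Fin.sum_univ_four, Matrix.one_apply] <;>
    first
      | ring1
      | linear_combination -h

lemma qB_mulVec_sq (a b c d : R) (h : a ^ 2 + b ^ 2 + c ^ 2 + d ^ 2 = -1) (w : Fin 4 → R) :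
    ∑ j : Fin 4, ((qB a b c d).mulVec w j) ^ 2 = -∑ j : Fin 4, (w j) ^ 2 := by
  simp only [Matrix.mulVec, dotProduct, Fin.sum_univ_four, qB]
  simp
  linear_combination (w 0 ^ 2 + w 1 ^ 2 + w 2 ^ 2 + w 3 ^ 2) * h

end QB

/-- For a prime `p` and `m ≥ 4`, the diagonal quadratic forms `q_{m,n}` (with `m`
coefficients `+1` and `n` coefficients `-1`) and `q_{m-4,n+4}` are equivalent over `ℤ_[p]`:
some matrix in `GL_{m+n}(ℤ_[p])` transforms one into the other. -/
theorem q_m_n_equiv_q_m_sub_four_n_add_four_padic (p : ℕ) [Fact p.Prime]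
    (m n : ℕ) (hm : 4 ≤ m) :
    ∃ M : Matrix (Fin (m + n)) (Fin (m + n)) ℤ_[p], IsUnit M.det ∧
      ∀ x : Fin (m + n) → ℤ_[p],
        (∑ i : Fin (m + n), (if i.val < m - 4 then (1 : ℤ_[p]) else -1) * x i ^ 2) =
        (∑ i : Fin (m + n), (if i.val < m then (1 : ℤ_[p]) else -1) * (M.mulVec x) i ^ 2) := by
  obtain ⟨a, b, c, d, hq⟩ := my_neg_one_sum_four_sq (p := p)
  set k := m - 4 with hk
  have hm4 : m = k + 4 := by omega
  have hkm : k + (4 + n) = m + n := by omega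
  let e : (Fin k ⊕ (Fin 4 ⊕ Fin n)) ≃ Fin (m + n) :=
    ((Equiv.sumCongr (Equiv.refl (Fin k)) finSumFinEquiv).trans finSumFinEquiv).trans
      (finCongr hkm)
  have he1 : ∀ i : Fin k, (e (Sum.inl i)).val = i.val := by
    intro i; simp [e]
  have he2 : ∀ j : Fin 4, (e (Sum.inr (Sum.inl j))).val = k + j.val := by
    intro j; simp [e]
  have he3 : ∀ l : Fin n, (e (Sum.inr (Sum.inr l))).val = k + (4 + l.val) := by
    intro l; simp [e]
  let N : Matrix (Fin k ⊕ (Fin 4 ⊕ Fin n)) (Fin k ⊕ (Fin 4 ⊕ Fin n)) ℤ_[p] :=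
    Matrix.fromBlocks 1 0 0 (Matrix.fromBlocks (qB a b c d) 0 0 1)
  refine ⟨(Matrix.reindex e e) N, ?_, ?_⟩
  · have hu : IsUnit (qB a b c d).det :=
      Matrix.isUnit_det_of_right_inverse (qB_mul_inv a b c d hq)
    rw [Matrix.det_reindex_self]
    show IsUnit (Matrix.fromBlocks 1 0 0 (Matrix.fromBlocks (qB a b c d) 0 0 1)).det
    rw [Matrix.det_fromBlocks_zero₂₁, Matrix.det_fromBlocks_zero₂₁, Matrix.det_one,
      Matrix.det_one, one_mul, mul_one]
    exact hu
  · intro x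
    set y : (Fin k ⊕ (Fin 4 ⊕ Fin n)) → ℤ_[p] := x ∘ e with hy
    have hmv : (Matrix.reindex e e N).mulVec x = (N.mulVec y) ∘ e.symm := by
      rw [Matrix.reindex_apply, Matrix.submatrix_mulVec_equiv]
      simp [hy]
    have hNy : N.mulVec y = Sum.elim (y ∘ Sum.inl)
        (Sum.elim ((qB a b c d).mulVec (y ∘ Sum.inr ∘ Sum.inl)) (y ∘ Sum.inr ∘ Sum.inr)) := by
      conv_lhs => rw [← Sum.elim_comp_inl_inr y]
      show (Matrix.fromBlocks 1 0 0 (Matrix.fromBlocks (qB a b c d) 0 0 1)).mulVec _ = _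
      rw [Matrix.fromBlocks_mulVec, Matrix.one_mulVec, Matrix.zero_mulVec, Matrix.zero_mulVec,
        add_zero, zero_add]
      rw [← Sum.elim_comp_inl_inr (y ∘ Sum.inr), Matrix.fromBlocks_mulVec, Matrix.one_mulVec,
        Matrix.zero_mulVec, Matrix.zero_mulVec, add_zero, zero_add]
      rfl
    rw [hmv]
    rw [← Equiv.sum_comp e (fun i : Fin (m + n) =>
          (if i.val < k then (1 : ℤ_[p]) else -1) * x i ^ 2),
        ← Equiv.sum_comp e (fun i : Fin (m + n) =>
          (if i.val < m then (1 : ℤ_[p]) else -1) * (((N.mulVec y) ∘ e.symm) i) ^ 2)]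
    simp only [Function.comp_apply, Equiv.symm_apply_apply, hNy]
    rw [Fintype.sum_sum_type, Fintype.sum_sum_type, Fintype.sum_sum_type, Fintype.sum_sum_type]
    refine congrArg₂ (· + ·) ?_ (congrArg₂ (· + ·) ?_ ?_)
    · refine Finset.sum_congr rfl fun i _ => ?_
      rw [he1]
      have h1 : i.val < k := i.isLt
      have h2 : i.val < m := by omega
      simp [h1, h2, hy]
    · have hL : ∀ j : Fin 4,
          (if (e (Sum.inr (Sum.inl j))).val < k then (1 : ℤ_[p]) else -1) *
            x (e (Sum.inr (Sum.inl j))) ^ 2 = -(y (Sum.inr (Sum.inl j)) ^ 2) := by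
        intro j
        rw [he2]
        have h1 : ¬ (k + j.val < k) := by omega
        simp [h1, hy]
      have hR : ∀ j : Fin 4,
          (if (e (Sum.inr (Sum.inl j))).val < m then (1 : ℤ_[p]) else -1) *
            (Sum.elim (y ∘ Sum.inl)
              (Sum.elim ((qB a b c d).mulVec (y ∘ Sum.inr ∘ Sum.inl)) (y ∘ Sum.inr ∘ Sum.inr))
              (Sum.inr (Sum.inl j))) ^ 2
            = ((qB a b c d).mulVec (fun s => y (Sum.inr (Sum.inl s))) j) ^ 2 := by
        intro j
        rw [he2]
        have h1 : k + j.val < m := by omega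
        simp [h1]
        rfl
      rw [Finset.sum_congr rfl fun j _ => hL j, Finset.sum_congr rfl fun j _ => hR j,
        qB_mulVec_sq a b c d hq]
      rw [← Finset.sum_neg_distrib]
    · refine Finset.sum_congr rfl fun l _ => ?_
      rw [he3]
      have h1 : ¬ (k + (4 + l.val) < k) := by omega
      have h2 : ¬ (k + (4 + l.val) < m) := by omega
      simp [h1, h2, hy]
end

section
/- Two finitely generated groups Γ₁ and Γ₂ have isomorphic profinite completions if and only if they have the same set of isomorphism classes of finite quotients. -/
/-- The index set of finite-index normal subgroups of `G`. -/
def NormalFI (G : Type*) [Group G] : Type _ :=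
  {N : Subgroup G // N.Normal ∧ N.FiniteIndex}

instance (G : Type*) [Group G] (N : NormalFI G) : N.1.Normal := N.2.1

/-- The profinite completion of a group `G`, realized as the subgroup of compatible
elements of the product of all finite quotients of `G`. -/
def ProfiniteCompletion (G : Type*) [Group G] :
    Subgroup (∀ N : NormalFI G, G ⧸ N.1) where
  carrier := {x | ∀ (N M : NormalFI G) (h : N.1 ≤ M.1),
    QuotientGroup.map N.1 M.1 (MonoidHom.id G) h (x N) = x M}
  one_mem' := by
    intro N M h
    simp
  mul_mem' := by
    intro a b ha hb N M h
    simp only [Pi.mul_apply, map_mul, ha N M h, hb N M h]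
  inv_mem' := by
    intro a ha N M h
    simp only [Pi.inv_apply, map_inv, ha N M h]

instance (G : Type*) [Group G] (N : NormalFI G) : TopologicalSpace (G ⧸ N.1) := ⊥

instance (G : Type*) [Group G] (N : NormalFI G) : DiscreteTopology (G ⧸ N.1) := ⟨rfl⟩

instance (G : Type*) [Group G] (N : NormalFI G) : IsTopologicalGroup (G ⧸ N.1) where
  continuous_mul := continuous_of_discreteTopology
  continuous_inv := continuous_of_discreteTopology

/-- The canonical homomorphism from `G` to its profinite completion. -/
def toProfiniteCompletion (G : Type*) [Group G] : G →* ProfiniteCompletion G where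
  toFun g := ⟨fun N => QuotientGroup.mk g, fun N M h => by
    simp [QuotientGroup.map_mk]
    rfl⟩
  map_one' := by
    ext N
    simp
  map_mul' g h := by
    ext N
    simp
namespace PCAux


open QuotientGroup

variable {G : Type*} [Group G]

lemma map_id_comp (N M P : Subgroup G) [N.Normal] [M.Normal] [P.Normal]
    (h1 : N ≤ M) (h2 : M ≤ P) (q : G ⧸ N) :
    QuotientGroup.map M P (MonoidHom.id G) h2 (QuotientGroup.map N M (MonoidHom.id G) h1 q) =
      QuotientGroup.map N P (MonoidHom.id G) (h1.trans h2) q := by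
  induction q using QuotientGroup.induction_on
  simp [QuotientGroup.map_mk]
  rfl

lemma map_id_self (N : Subgroup G) [N.Normal] (q : G ⧸ N) :
    QuotientGroup.map N N (MonoidHom.id G) le_rfl q = q := by
  induction q using QuotientGroup.induction_on
  rfl



variable {G : Type*} [Group G]

lemma finite_homs (G : Type*) [Group G] (hFG : Group.FG G)
    (Q : Type*) [Group Q] [Finite Q] : Finite (G →* Q) := by
  obtain ⟨S, hS⟩ := hFG.1
  have : Function.Injective (fun f : G →* Q => fun s : S => f s.1) := by
    intro f g h
    refine MonoidHom.eq_of_eqOn_dense (s := (S : Set G)) ?_ ?_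
    · simpa using hS
    · intro x hx
      exact congrFun h ⟨x, hx⟩
  exact Finite.of_injective _ this

/-- The set of normal subgroups of finite index at most `n`. -/
def BddNormal (G : Type*) [Group G] (n : ℕ) : Set (Subgroup G) :=
  {N | N.Normal ∧ N.FiniteIndex ∧ N.index ≤ n}

lemma ker_toPermHom (N : Subgroup G) [N.Normal] :
    (MulAction.toPermHom G (G ⧸ N)).ker = N := by
  rw [← Subgroup.normalCore_eq_ker]
  exact le_antisymm N.normalCore_le (Subgroup.normal_le_normalCore.mpr le_rfl)

lemma finite_bddNormal (G : Type*) [Group G] (hFG : Group.FG G) (n : ℕ) :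
    (BddNormal G n).Finite := by
  have hfin : Finite (G →* Equiv.Perm (Fin n)) := finite_homs G hFG _
  have key : ∀ N : BddNormal G n, ∃ f : G →* Equiv.Perm (Fin n), f.ker = N.1 := by
    rintro ⟨N, hN, hFI, hle⟩
    haveI : N.Normal := hN
    haveI : N.FiniteIndex := hFI
    haveI : Finite (G ⧸ N) := N.finite_quotient_of_finiteIndex
    haveI : Fintype (G ⧸ N) := Fintype.ofFinite _
    have hcard : Fintype.card (G ⧸ N) ≤ Fintype.card (Fin n) := by
      have hc : Fintype.card (G ⧸ N) = N.index := by
        rw [Subgroup.index_eq_card, Nat.card_eq_fintype_card]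
      rw [hc, Fintype.card_fin]
      exact hle
    obtain ⟨ι⟩ := Function.Embedding.nonempty_of_card_le hcard
    refine ⟨(Equiv.Perm.viaEmbeddingHom ι).comp (MulAction.toPermHom G (G ⧸ N)), ?_⟩
    have hker : ((Equiv.Perm.viaEmbeddingHom ι).comp (MulAction.toPermHom G (G ⧸ N))).ker =
        (MulAction.toPermHom G (G ⧸ N)).ker := by
      ext x
      simp only [MonoidHom.mem_ker, MonoidHom.comp_apply]
      rw [← map_one (Equiv.Perm.viaEmbeddingHom ι),
        (Equiv.Perm.viaEmbeddingHom_injective ι).eq_iff]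
    rw [hker, ker_toPermHom]
  choose f hf using key
  rw [← Set.finite_coe_iff]
  have hinj : Function.Injective f := by
    intro N M h
    ext1
    rw [← hf N, ← hf M, h]
  exact Finite.of_injective f hinj

/-- The intersection of all normal subgroups of index at most `n`. -/
def KSub (G : Type*) [Group G] (n : ℕ) : Subgroup G := sInf (BddNormal G n)

instance KSub_normal (G : Type*) [Group G] (n : ℕ) : (KSub G n).Normal := by
  constructor
  intro x hx g
  rw [KSub, Subgroup.mem_sInf] at hx ⊢
  intro N hN
  exact hN.1.conj_mem x (hx N hN) g

lemma KSub_finiteIndex (G : Type*) [Group G] (hFG : Group.FG G) (n : ℕ) :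
    (KSub G n).FiniteIndex := by
  haveI : Finite (BddNormal G n) := (finite_bddNormal G hFG n).to_subtype
  have : KSub G n = ⨅ N : BddNormal G n, N.1 := by
    rw [KSub, sInf_eq_iInf']
  rw [this]
  exact Subgroup.finiteIndex_iInf fun N => N.2.2.1

lemma KSub_le {G : Type*} [Group G] {n : ℕ} {N : Subgroup G} (hN : N ∈ BddNormal G n) :
    KSub G n ≤ N := sInf_le hN

lemma KSub_antitone (G : Type*) [Group G] {n m : ℕ} (h : n ≤ m) : KSub G m ≤ KSub G n := by
  apply sInf_le_sInf
  rintro N ⟨h1, h2, h3⟩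
  exact ⟨h1, h2, h3.trans h⟩

lemma mem_KSub_iff {G : Type*} [Group G] {n : ℕ} {g : G} :
    g ∈ KSub G n ↔ ∀ N ∈ BddNormal G n, g ∈ N := Subgroup.mem_sInf


open QuotientGroup

lemma KSub_le_ker {G H : Type*} [Group G] [Group H] {n : ℕ}
    (f : H →* G ⧸ KSub G n) (hf : Function.Surjective f) : KSub H n ≤ f.ker := by
  intro x hx
  rw [MonoidHom.mem_ker]
  obtain ⟨g, hg⟩ := QuotientGroup.mk_surjective (f x)
  have hgK : g ∈ KSub G n := by
    rw [mem_KSub_iff]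
    intro N hN
    haveI : N.Normal := hN.1
    set π := QuotientGroup.map (KSub G n) N (MonoidHom.id G) (KSub_le hN) with hπ
    have hπs : Function.Surjective π := by
      intro q
      obtain ⟨a, rfl⟩ := QuotientGroup.mk_surjective q
      exact ⟨QuotientGroup.mk a, by simp [hπ, QuotientGroup.map_mk]⟩
    have hcomp : (π.comp f).ker ∈ BddNormal H n := by
      have hsurj : Function.Surjective (π.comp f) := hπs.comp hf
      have hidx : (π.comp f).ker.index = N.index := by
        rw [Subgroup.index_ker, MonoidHom.range_eq_top.2 hsurj, Subgroup.card_top,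
          Subgroup.index_eq_card]
      refine ⟨MonoidHom.normal_ker _, ⟨?_⟩, ?_⟩
      · rw [hidx]; exact hN.2.1.1
      · rw [hidx]; exact hN.2.2
    have hx' : x ∈ (π.comp f).ker := KSub_le hcomp hx
    rw [MonoidHom.mem_ker, MonoidHom.comp_apply, ← hg, hπ, QuotientGroup.map_mk] at hx'
    simpa using (QuotientGroup.eq_one_iff g).mp hx'
  rw [← hg]
  exact (QuotientGroup.eq_one_iff g).mpr hgK

/-- Level-`n` isomorphism type. -/
abbrev LIso (Γ₁ Γ₂ : Type*) [Group Γ₁] [Group Γ₂] (n : ℕ) : Type _ :=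
  (Γ₁ ⧸ KSub Γ₁ n) ≃* (Γ₂ ⧸ KSub Γ₂ n)

variable {Γ₁ Γ₂ : Type} [Group Γ₁] [Group Γ₂]

/-- The restriction of a level-`m` isomorphism to level `n ≤ m`, as a hom. -/
noncomputable def resHom {n m : ℕ} (h : n ≤ m) (φ : LIso Γ₁ Γ₂ m) :
    (Γ₁ ⧸ KSub Γ₁ n) →* (Γ₂ ⧸ KSub Γ₂ n) :=
  QuotientGroup.lift (KSub Γ₁ n)
    ((QuotientGroup.map (KSub Γ₂ m) (KSub Γ₂ n) (MonoidHom.id Γ₂) (KSub_antitone Γ₂ h)).comp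
      (φ.toMonoidHom.comp
        (QuotientGroup.mk' (KSub Γ₁ m))))
    (by
      have hsurj : Function.Surjective
          ((QuotientGroup.map (KSub Γ₂ m) (KSub Γ₂ n) (MonoidHom.id Γ₂)
              (KSub_antitone Γ₂ h)).comp
            (φ.toMonoidHom.comp
              (QuotientGroup.mk' (KSub Γ₁ m)))) := by
        intro q
        obtain ⟨a, rfl⟩ := QuotientGroup.mk_surjective q
        obtain ⟨b, hb⟩ := φ.surjective
          (QuotientGroup.mk a)
        obtain ⟨c, rfl⟩ := QuotientGroup.mk_surjective b
        exact ⟨c, by simp [hb, QuotientGroup.map_mk]; rfl⟩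
      have := KSub_le_ker _ hsurj
      intro x hx
      have := this hx
      rwa [MonoidHom.mem_ker] at this)

lemma resHom_mk {n m : ℕ} (h : n ≤ m) (φ : LIso Γ₁ Γ₂ m) (g : Γ₁) :
    resHom h φ (QuotientGroup.mk g) =
      QuotientGroup.map (KSub Γ₂ m) (KSub Γ₂ n) (MonoidHom.id Γ₂) (KSub_antitone Γ₂ h)
        (φ (QuotientGroup.mk g)) := rfl

lemma resHom_surjective {n m : ℕ} (h : n ≤ m) (φ : LIso Γ₁ Γ₂ m) :
    Function.Surjective (resHom h φ) := by
  intro q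
  obtain ⟨a, rfl⟩ := QuotientGroup.mk_surjective q
  obtain ⟨b, hb⟩ := φ.surjective (QuotientGroup.mk a)
  obtain ⟨c, rfl⟩ := QuotientGroup.mk_surjective b
  exact ⟨QuotientGroup.mk c, by simp [resHom_mk, hb, QuotientGroup.map_mk]; rfl⟩


section Levels

open CategoryTheory Opposite

variable (Γ₁ Γ₂ : Type) [Group Γ₁] [Group Γ₂]

lemma finite_quot (h₁ : Group.FG Γ₁) (n : ℕ) : Finite (Γ₁ ⧸ KSub Γ₁ n) := by
  haveI : (KSub Γ₁ n).FiniteIndex := KSub_finiteIndex Γ₁ h₁ n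
  exact (KSub Γ₁ n).finite_quotient_of_finiteIndex

lemma finite_LIso (h₁ : Group.FG Γ₁) (h₂ : Group.FG Γ₂) (n : ℕ) :
    Finite (LIso Γ₁ Γ₂ n) := by
  haveI := finite_quot Γ₁ h₁ n
  haveI := finite_quot Γ₂ h₂ n
  exact Finite.of_injective (fun e : LIso Γ₁ Γ₂ n => ⇑e) DFunLike.coe_injective

/-- Having the same finite quotients. -/
def SameQuot (Γ₁ Γ₂ : Type) [Group Γ₁] [Group Γ₂] : Prop :=
  ∀ (Q : Type) [Group Q] [Finite Q],
    (∃ f : Γ₁ →* Q, Function.Surjective f) ↔ (∃ f : Γ₂ →* Q, Function.Surjective f)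

lemma SameQuot.symm {Γ₁ Γ₂ : Type} [Group Γ₁] [Group Γ₂] (h : SameQuot Γ₁ Γ₂) :
    SameQuot Γ₂ Γ₁ := fun Q _ _ => (h Q).symm

lemma exists_levelSurj (hQ : SameQuot Γ₁ Γ₂) (h₁ : Group.FG Γ₁) (h₂ : Group.FG Γ₂) (n : ℕ) :
    ∃ F : (Γ₂ ⧸ KSub Γ₂ n) →* (Γ₁ ⧸ KSub Γ₁ n), Function.Surjective F := by
  haveI := finite_quot Γ₁ h₁ n
  obtain ⟨f, hf⟩ := (hQ (Γ₁ ⧸ KSub Γ₁ n)).mp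
    ⟨QuotientGroup.mk' (KSub Γ₁ n), QuotientGroup.mk_surjective⟩
  refine ⟨QuotientGroup.lift (KSub Γ₂ n) f (fun x hx => ?_), ?_⟩
  · have := KSub_le_ker f hf hx
    rwa [MonoidHom.mem_ker] at this
  · intro q
    obtain ⟨a, ha⟩ := hf q
    exact ⟨QuotientGroup.mk a, ha⟩

lemma card_level_eq (hQ : SameQuot Γ₁ Γ₂) (h₁ : Group.FG Γ₁) (h₂ : Group.FG Γ₂) (n : ℕ) :
    Nat.card (Γ₁ ⧸ KSub Γ₁ n) = Nat.card (Γ₂ ⧸ KSub Γ₂ n) := by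
  haveI := finite_quot Γ₁ h₁ n
  haveI := finite_quot Γ₂ h₂ n
  obtain ⟨F, hF⟩ := exists_levelSurj Γ₁ Γ₂ hQ h₁ h₂ n
  obtain ⟨F', hF'⟩ := exists_levelSurj Γ₂ Γ₁ hQ.symm h₂ h₁ n
  exact le_antisymm (Nat.card_le_card_of_surjective ⇑F hF)
    (Nat.card_le_card_of_surjective ⇑F' hF')

lemma surj_bijective (hQ : SameQuot Γ₁ Γ₂) (h₁ : Group.FG Γ₁) (h₂ : Group.FG Γ₂) {n : ℕ}
    (f : (Γ₁ ⧸ KSub Γ₁ n) →* (Γ₂ ⧸ KSub Γ₂ n)) (hf : Function.Surjective f) :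
    Function.Bijective f := by
  haveI := finite_quot Γ₁ h₁ n
  haveI := finite_quot Γ₂ h₂ n
  exact (Nat.bijective_iff_surjective_and_card f).mpr
    ⟨hf, card_level_eq Γ₁ Γ₂ hQ h₁ h₂ n⟩

lemma nonempty_LIso (hQ : SameQuot Γ₁ Γ₂) (h₁ : Group.FG Γ₁) (h₂ : Group.FG Γ₂) (n : ℕ) :
    Nonempty (LIso Γ₁ Γ₂ n) := by
  obtain ⟨F, hF⟩ := exists_levelSurj Γ₂ Γ₁ hQ.symm h₂ h₁ n
  exact ⟨MulEquiv.ofBijective F (surj_bijective Γ₁ Γ₂ hQ h₁ h₂ F hF)⟩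

/-- The restricted isomorphism. -/
noncomputable def resIso (hQ : SameQuot Γ₁ Γ₂) (h₁ : Group.FG Γ₁) (h₂ : Group.FG Γ₂) {n m : ℕ} (h : n ≤ m)
    (φ : LIso Γ₁ Γ₂ m) : LIso Γ₁ Γ₂ n :=
  MulEquiv.ofBijective (resHom h φ)
    (surj_bijective Γ₁ Γ₂ hQ h₁ h₂ _ (resHom_surjective h φ))

lemma resIso_mk (hQ : SameQuot Γ₁ Γ₂) (h₁ : Group.FG Γ₁) (h₂ : Group.FG Γ₂) {n m : ℕ} (h : n ≤ m)
    (φ : LIso Γ₁ Γ₂ m) (g : Γ₁) :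
    resIso Γ₁ Γ₂ hQ h₁ h₂ h φ (QuotientGroup.mk g) =
      QuotientGroup.map (KSub Γ₂ m) (KSub Γ₂ n) (MonoidHom.id Γ₂) (KSub_antitone Γ₂ h)
        (φ (QuotientGroup.mk g)) := rfl

/-- The inverse system of level isomorphisms. -/
noncomputable def LFunctor (hQ : SameQuot Γ₁ Γ₂) (h₁ : Group.FG Γ₁) (h₂ : Group.FG Γ₂) :
    ℕᵒᵖ ⥤ Type where
  obj j := LIso Γ₁ Γ₂ j.unop
  map {j k} f := TypeCat.ofHom fun φ => resIso Γ₁ Γ₂ hQ h₁ h₂ (leOfHom f.unop) φ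
  map_id j := by
    refine ConcreteCategory.hom_ext _ _ fun φ => ?_
    apply MulEquiv.toMonoidHom_injective
    apply MonoidHom.ext
    intro q
    induction q using QuotientGroup.induction_on with
    | H g => simp [resIso_mk, map_id_self]
  map_comp {i j k} f g := by
    refine ConcreteCategory.hom_ext _ _ fun φ => ?_
    apply MulEquiv.toMonoidHom_injective
    apply MonoidHom.ext
    intro q
    induction q using QuotientGroup.induction_on with
    | H a =>
      simp only [types_comp_apply, MulEquiv.coe_toMonoidHom, TypeCat.ofHom_apply, resIso_mk]
      rw [map_id_comp]

lemma exists_compatible (hQ : SameQuot Γ₁ Γ₂) (h₁ : Group.FG Γ₁) (h₂ : Group.FG Γ₂) :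
    ∃ φ : ∀ n, LIso Γ₁ Γ₂ n,
      ∀ (n m : ℕ) (h : n ≤ m) (q : Γ₁ ⧸ KSub Γ₁ m),
        (φ n) (QuotientGroup.map (KSub Γ₁ m) (KSub Γ₁ n) (MonoidHom.id Γ₁)
            (KSub_antitone Γ₁ h) q) =
          QuotientGroup.map (KSub Γ₂ m) (KSub Γ₂ n) (MonoidHom.id Γ₂) (KSub_antitone Γ₂ h)
            ((φ m) q) := by
  haveI : ∀ j : ℕᵒᵖ, Finite ((LFunctor Γ₁ Γ₂ hQ h₁ h₂).obj j) :=
    fun j => finite_LIso Γ₁ Γ₂ h₁ h₂ j.unop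
  haveI : ∀ j : ℕᵒᵖ, Nonempty ((LFunctor Γ₁ Γ₂ hQ h₁ h₂).obj j) :=
    fun j => nonempty_LIso Γ₁ Γ₂ hQ h₁ h₂ j.unop
  obtain ⟨u, hu⟩ := nonempty_sections_of_finite_inverse_system (LFunctor Γ₁ Γ₂ hQ h₁ h₂)
  refine ⟨fun n => u (Opposite.op n), ?_⟩
  intro n m h q
  have key : resIso Γ₁ Γ₂ hQ h₁ h₂ h (u (Opposite.op m)) = u (Opposite.op n) :=
    by have := hu (f := (homOfLE h).op); exact this
  induction q using QuotientGroup.induction_on with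
  | H g =>
    have key' := DFunLike.congr_fun key (QuotientGroup.mk g : Γ₁ ⧸ KSub Γ₁ n)
    beta_reduce
    exact key'.symm.trans (resIso_mk Γ₁ Γ₂ hQ h₁ h₂ h _ g)

end Levels

section Completion

open QuotientGroup

lemma mem_PC {G : Type*} [Group G] {x : ∀ N : NormalFI G, G ⧸ N.1} :
    x ∈ ProfiniteCompletion G ↔ ∀ (N M : NormalFI G) (h : N.1 ≤ M.1),
      QuotientGroup.map N.1 M.1 (MonoidHom.id G) h (x N) = x M := Iff.rfl

/-- The `NormalFI` element given by `KSub`. -/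
def KNFI (G : Type) [Group G] (hFG : Group.FG G) (n : ℕ) : NormalFI G :=
  ⟨KSub G n, KSub_normal G n, KSub_finiteIndex G hFG n⟩

lemma KSub_le_NormalFI {G : Type*} [Group G] (N : NormalFI G) : KSub G N.1.index ≤ N.1 :=
  KSub_le ⟨N.2.1, N.2.2, le_rfl⟩

variable {Γ₁ Γ₂ : Type} [Group Γ₁] [Group Γ₂]

/-- Compatibility of a family of level isomorphisms. -/
def Compat (φ : ∀ n, LIso Γ₁ Γ₂ n) : Prop :=
  ∀ (n m : ℕ) (h : n ≤ m) (q : Γ₁ ⧸ KSub Γ₁ m),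
    (φ n) (QuotientGroup.map (KSub Γ₁ m) (KSub Γ₁ n) (MonoidHom.id Γ₁) (KSub_antitone Γ₁ h) q) =
      QuotientGroup.map (KSub Γ₂ m) (KSub Γ₂ n) (MonoidHom.id Γ₂) (KSub_antitone Γ₂ h) ((φ m) q)

lemma Compat.symm {φ : ∀ n, LIso Γ₁ Γ₂ n} (hφ : Compat φ) :
    Compat (fun n => (φ n).symm) := by
  intro n m h q
  have := hφ n m h ((φ m).symm q)
  apply (φ n).injective
  rw [MulEquiv.apply_symm_apply]
  rw [this, MulEquiv.apply_symm_apply]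

/-- The value of the forward map of completions. -/
noncomputable def fwdVal (h₁ : Group.FG Γ₁) (φ : ∀ n, LIso Γ₁ Γ₂ n)
    (x : ∀ N : NormalFI Γ₁, Γ₁ ⧸ N.1) (N : NormalFI Γ₂) : Γ₂ ⧸ N.1 :=
  QuotientGroup.map (KSub Γ₂ N.1.index) N.1 (MonoidHom.id Γ₂) (KSub_le_NormalFI N)
    ((φ N.1.index) (x (KNFI Γ₁ h₁ N.1.index)))

lemma fwd_step (h₁ : Group.FG Γ₁) (φ : ∀ n, LIso Γ₁ Γ₂ n) (hφ : Compat φ)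
    {x : ∀ N : NormalFI Γ₁, Γ₁ ⧸ N.1} (hx : x ∈ ProfiniteCompletion Γ₁)
    {n m : ℕ} (hnm : n ≤ m) (N : Subgroup Γ₂) [N.Normal] (hn : KSub Γ₂ n ≤ N) :
    QuotientGroup.map (KSub Γ₂ n) N (MonoidHom.id Γ₂) hn ((φ n) (x (KNFI Γ₁ h₁ n))) =
      QuotientGroup.map (KSub Γ₂ m) N (MonoidHom.id Γ₂) ((KSub_antitone Γ₂ hnm).trans hn)
        ((φ m) (x (KNFI Γ₁ h₁ m))) := by
  have hx' : x (KNFI Γ₁ h₁ n) =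
      QuotientGroup.map (KSub Γ₁ m) (KSub Γ₁ n) (MonoidHom.id Γ₁) (KSub_antitone Γ₁ hnm)
        (x (KNFI Γ₁ h₁ m)) :=
    (hx (KNFI Γ₁ h₁ m) (KNFI Γ₁ h₁ n) (KSub_antitone Γ₁ hnm)).symm
  erw [hx', hφ n m hnm, map_id_comp]

lemma fwdVal_spec (h₁ : Group.FG Γ₁) (φ : ∀ n, LIso Γ₁ Γ₂ n) (hφ : Compat φ)
    {x : ∀ N : NormalFI Γ₁, Γ₁ ⧸ N.1} (hx : x ∈ ProfiniteCompletion Γ₁)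
    (N : NormalFI Γ₂) (n : ℕ) (hn : KSub Γ₂ n ≤ N.1) :
    fwdVal h₁ φ x N =
      QuotientGroup.map (KSub Γ₂ n) N.1 (MonoidHom.id Γ₂) hn ((φ n) (x (KNFI Γ₁ h₁ n))) := by
  rw [fwd_step h₁ φ hφ hx (le_max_left n N.1.index) N.1 hn, fwdVal,
    fwd_step h₁ φ hφ hx (le_max_right n N.1.index) N.1 (KSub_le_NormalFI N)]

lemma fwdVal_mem (h₁ : Group.FG Γ₁) (φ : ∀ n, LIso Γ₁ Γ₂ n) (hφ : Compat φ)
    {x : ∀ N : NormalFI Γ₁, Γ₁ ⧸ N.1} (hx : x ∈ ProfiniteCompletion Γ₁) :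
    (fun N => fwdVal h₁ φ x N) ∈ ProfiniteCompletion Γ₂ := by
  rw [mem_PC]
  intro N M h
  have hNM : KSub Γ₂ N.1.index ≤ M.1 := (KSub_le_NormalFI N).trans h
  rw [fwdVal, map_id_comp, ← fwdVal_spec h₁ φ hφ hx M N.1.index hNM]

/-- The forward map of completions. -/
noncomputable def fwdFun (h₁ : Group.FG Γ₁) (φ : ∀ n, LIso Γ₁ Γ₂ n) (hφ : Compat φ)
    (x : ProfiniteCompletion Γ₁) : ProfiniteCompletion Γ₂ :=
  ⟨fun N => fwdVal h₁ φ x.1 N, fwdVal_mem h₁ φ hφ x.2⟩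

lemma continuous_fwdFun (h₁ : Group.FG Γ₁) (φ : ∀ n, LIso Γ₁ Γ₂ n) (hφ : Compat φ) :
    Continuous (fwdFun h₁ φ hφ) := by
  apply Continuous.subtype_mk
  apply continuous_pi
  intro N
  show Continuous ((fun q : Γ₁ ⧸ (KNFI Γ₁ h₁ N.1.index).1 =>
      QuotientGroup.map (KSub Γ₂ N.1.index) N.1 (MonoidHom.id Γ₂) (KSub_le_NormalFI N)
        ((φ N.1.index) q)) ∘
    (fun x : ProfiniteCompletion Γ₁ => x.1 (KNFI Γ₁ h₁ N.1.index)))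
  exact Continuous.comp continuous_of_discreteTopology
    ((continuous_apply (KNFI Γ₁ h₁ N.1.index)).comp continuous_subtype_val)

lemma fwdFun_bwdFun (h₁ : Group.FG Γ₁) (h₂ : Group.FG Γ₂) (φ : ∀ n, LIso Γ₁ Γ₂ n)
    (hφ : Compat φ) (x : ProfiniteCompletion Γ₁) :
    fwdFun h₂ (fun n => (φ n).symm) hφ.symm (fwdFun h₁ φ hφ x) = x := by
  ext N
  show fwdVal h₂ (fun n => (φ n).symm) (fwdFun h₁ φ hφ x).1 N = x.1 N
  set n := N.1.index
  have hmid : (fwdFun h₁ φ hφ x).1 (KNFI Γ₂ h₂ n) = (φ n) (x.1 (KNFI Γ₁ h₁ n)) := by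
    show fwdVal h₁ φ x.1 (KNFI Γ₂ h₂ n) = _
    rw [fwdVal_spec h₁ φ hφ x.2 (KNFI Γ₂ h₂ n) n le_rfl]
    obtain ⟨g, hg⟩ := QuotientGroup.mk_surjective ((φ n) (x.1 (KNFI Γ₁ h₁ n)))
    erw [← hg, QuotientGroup.map_mk]
    rfl
  rw [fwdVal, hmid]
  show QuotientGroup.map (KSub Γ₁ n) N.1 (MonoidHom.id Γ₁) (KSub_le_NormalFI N)
    ((φ n).symm ((φ n) (x.1 (KNFI Γ₁ h₁ n)))) = x.1 N
  erw [MulEquiv.symm_apply_apply]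
  exact x.2 (KNFI Γ₁ h₁ n) N (KSub_le_NormalFI N)

/-- The isomorphism of completions built from a compatible family. -/
noncomputable def completionEquiv (h₁ : Group.FG Γ₁) (h₂ : Group.FG Γ₂)
    (φ : ∀ n, LIso Γ₁ Γ₂ n) (hφ : Compat φ) :
    ProfiniteCompletion Γ₁ ≃* ProfiniteCompletion Γ₂ where
  toFun := fwdFun h₁ φ hφ
  invFun := fwdFun h₂ (fun n => (φ n).symm) hφ.symm
  left_inv := fwdFun_bwdFun h₁ h₂ φ hφ
  right_inv := by
    have : Compat (fun n => (φ n).symm) := hφ.symm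
    intro x
    have := fwdFun_bwdFun h₂ h₁ (fun n => (φ n).symm) hφ.symm x
    convert this using 2
    rfl
  map_mul' x y := by
    ext N
    show fwdVal h₁ φ (x * y).1 N = fwdVal h₁ φ x.1 N * fwdVal h₁ φ y.1 N
    have : (x * y).1 = x.1 * y.1 := rfl
    erw [fwdVal, fwdVal, fwdVal, this, Pi.mul_apply, map_mul, map_mul]

end Completion

section Forward

open QuotientGroup

lemma denseRange_toPC (G : Type*) [Group G] :
    DenseRange (⇑(toProfiniteCompletion G)) := by
  intro x
  rw [mem_closure_iff]
  intro O hO hxO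
  obtain ⟨V, hVopen, rfl⟩ := isOpen_induced_iff.mp hO
  have hxV : x.1 ∈ V := hxO
  obtain ⟨I, u, hu, hsub⟩ := isOpen_pi_iff.mp hVopen x.1 hxV
  set M : Subgroup G := ⨅ N ∈ I, N.1 with hM
  haveI hMnormal : M.Normal := by
    constructor
    intro a ha g
    simp only [hM, Subgroup.mem_iInf] at ha ⊢
    intro N hN
    exact N.2.1.conj_mem a (ha N hN) g
  have hMFI : M.FiniteIndex := Subgroup.finiteIndex_iInf' _ (fun N _ => N.2.2)
  set M' : NormalFI G := ⟨M, hMnormal, hMFI⟩ with hM'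
  obtain ⟨g, hg⟩ := QuotientGroup.mk_surjective (x.1 M')
  refine ⟨toProfiniteCompletion G g, ?_, Set.mem_range_self g⟩
  show (toProfiniteCompletion G g).1 ∈ V
  apply hsub
  intro N hN
  have hle : M ≤ N.1 := biInf_le (fun N : NormalFI G => N.1) hN
  have := x.2 M' N hle
  erw [← hg, QuotientGroup.map_mk] at this
  show (toProfiniteCompletion G g).1 N ∈ u N
  have hcoord : (toProfiniteCompletion G g).1 N = QuotientGroup.mk g := rfl
  rw [hcoord, show (QuotientGroup.mk g : G ⧸ N.1) = x.1 N from this]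
  exact (hu N hN).2

lemma transfer_aux {Γ₁ Γ₂ : Type} [Group Γ₁] [Group Γ₂]
    (e : ProfiniteCompletion Γ₁ ≃* ProfiniteCompletion Γ₂) (he : Continuous ⇑e.symm)
    (N : NormalFI Γ₁) (q : Γ₁ ⧸ N.1) :
    ∃ g : Γ₂, (e.symm (toProfiniteCompletion Γ₂ g)).1 N = q := by
  obtain ⟨a, rfl⟩ := QuotientGroup.mk_surjective q
  have hUopen : IsOpen ((fun z : ProfiniteCompletion Γ₂ => (e.symm z).1 N) ⁻¹'
      {(QuotientGroup.mk a : Γ₁ ⧸ N.1)}) :=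
    IsOpen.preimage (((continuous_apply N).comp continuous_subtype_val).comp he)
      (isOpen_discrete _)
  have hUne : e (toProfiniteCompletion Γ₁ a) ∈
      ((fun z : ProfiniteCompletion Γ₂ => (e.symm z).1 N) ⁻¹'
        {(QuotientGroup.mk a : Γ₁ ⧸ N.1)}) := by
    simp only [Set.mem_preimage, Set.mem_singleton_iff, MulEquiv.symm_apply_apply]
    rfl
  obtain ⟨g, hg⟩ := (denseRange_toPC Γ₂).exists_mem_open hUopen ⟨_, hUne⟩
  exact ⟨g, hg⟩

lemma transfer {Γ₁ Γ₂ : Type} [Group Γ₁] [Group Γ₂]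
    (e : ProfiniteCompletion Γ₁ ≃* ProfiniteCompletion Γ₂) (he : Continuous ⇑e.symm)
    (Q : Type) [Group Q] [Finite Q] (hf : ∃ f : Γ₁ →* Q, Function.Surjective f) :
    ∃ f : Γ₂ →* Q, Function.Surjective f := by
  obtain ⟨f, hf⟩ := hf
  haveI hker : f.ker.Normal := f.normal_ker
  have hFI : f.ker.FiniteIndex := by
    constructor
    rw [Subgroup.index_ker]
    exact Nat.card_ne_zero.mpr ⟨⟨1, ⟨1, map_one f⟩⟩, inferInstance⟩
  refine ⟨((QuotientGroup.lift f.ker f (fun x hx => hx)).comp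
      ((Pi.evalMonoidHom (fun N : NormalFI Γ₁ => Γ₁ ⧸ N.1) (⟨f.ker, hker, hFI⟩ : NormalFI Γ₁)).comp
        (ProfiniteCompletion Γ₁).subtype)).comp
      (e.symm.toMonoidHom.comp (toProfiniteCompletion Γ₂)), fun q => ?_⟩
  obtain ⟨a, ha⟩ := hf q
  obtain ⟨g, hg⟩ := transfer_aux e he (⟨f.ker, hker, hFI⟩ : NormalFI Γ₁)
    (QuotientGroup.mk a)
  refine ⟨g, ?_⟩
  show QuotientGroup.lift f.ker f (fun x hx => hx)
    ((e.symm (toProfiniteCompletion Γ₂ g)).1 (⟨f.ker, hker, hFI⟩ : NormalFI Γ₁)) = q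
  rw [hg]
  show f a = q
  exact ha

end Forward
end PCAux

/-- Two finitely generated groups have isomorphic profinite completions (as topological
groups) if and only if they have the same finite quotients. -/
theorem profiniteCompletion_iso_iff_same_finite_quotients
    (Γ₁ Γ₂ : Type) [Group Γ₁] [Group Γ₂] (h₁ : Group.FG Γ₁) (h₂ : Group.FG Γ₂) :
    (∃ e : ProfiniteCompletion Γ₁ ≃* ProfiniteCompletion Γ₂,
        Continuous e ∧ Continuous e.symm) ↔
      (∀ (Q : Type) [Group Q] [Finite Q],
        (∃ f : Γ₁ →* Q, Function.Surjective f) ↔ (∃ f : Γ₂ →* Q, Function.Surjective f)) := by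
  constructor
  · rintro ⟨e, he1, he2⟩ Q _ _
    refine ⟨fun h => PCAux.transfer e he2 Q h, fun h => PCAux.transfer e.symm ?_ Q h⟩
    rw [MulEquiv.symm_symm]
    exact he1
  · intro hQ
    obtain ⟨φ, hφ⟩ := PCAux.exists_compatible Γ₁ Γ₂ hQ h₁ h₂
    exact ⟨PCAux.completionEquiv h₁ h₂ φ hφ,
      PCAux.continuous_fwdFun h₁ φ hφ,
      PCAux.continuous_fwdFun h₂ (fun n => (φ n).symm) (PCAux.Compat.symm hφ)⟩
end
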